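/- Let c ∈ C^n(ℝ) and define h(s) = Σ_{j=0}^n (1/j!) C(n,j) s^j c^{(j)}(s). Then the n-fold iterated antiderivative h_n of h starting at 0 (i.e., h_1(s)=∫_0^s h, h_{k+1}(s)=∫_0^s h_k) satisfies h_n(s) = s^n c(s)/n! for all s ≥ 0. More generally, h_k(s) = Σ_{j=0}^{n−k} (1/(j+k)!) C(n−k, j) s^{j+k} c^{(j)}(s) for 1 ≤ k ≤ n. -/

import Mathlib

open MeasureTheory Real

/-- Auxiliary family: `auxF n c m s = ∑_{j=0}^{m} (1/(j+(n-m))!) C(m,j) s^{j+(n-m)} c^{(j)}(s)`. -/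
noncomputable def auxF (n : ℕ) (c : ℝ → ℝ) (m : ℕ) (s : ℝ) : ℝ :=
  ∑ j ∈ Finset.range (m + 1),
    (1 / ((j + (n - m)).factorial : ℝ)) * (m.choose j : ℝ) * s ^ (j + (n - m)) *
      iteratedDeriv j c s

lemma auxF_cont (n : ℕ) (c : ℝ → ℝ) (hc : ContDiff ℝ n c) (m : ℕ) (hm : m ≤ n) :
    Continuous (auxF n c m) := by
  unfold auxF
  apply continuous_finset_sum
  intro j hj
  have hjn : j ≤ n := le_trans (Nat.lt_succ_iff.mp (Finset.mem_range.mp hj)) hm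
  exact ((continuous_const.mul (continuous_pow _)).mul
    (hc.continuous_iteratedDeriv j (by exact_mod_cast hjn)))

lemma aux_binom (m : ℕ) (b : ℕ → ℝ) :
    ∑ j ∈ Finset.range (m + 2), ((m + 1).choose j : ℝ) * b j
      = ∑ j ∈ Finset.range (m + 1), (m.choose j : ℝ) * b j
        + ∑ j ∈ Finset.range (m + 1), (m.choose j : ℝ) * b (j + 1) := by
  rw [Finset.sum_range_succ' (fun j => ((m + 1).choose j : ℝ) * b j)]
  rw [Finset.sum_range_succ' (fun j => ((m).choose j : ℝ) * b j)]
  simp only [Nat.choose_succ_succ, Nat.choose_zero_right, Nat.cast_add, Nat.cast_one]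
  simp only [add_mul, Finset.sum_add_distrib]
  rw [Finset.sum_range_succ (fun x => ((m).choose (x + 1) : ℝ) * b (x + 1))]
  simp [Nat.choose_succ_self]
  ring

lemma auxF_deriv (n : ℕ) (c : ℝ → ℝ) (hc : ContDiff ℝ n c) (m : ℕ) (hm : m < n) (s : ℝ) :
    HasDerivAt (auxF n c m) (auxF n c (m + 1) s) s := by
  set K : ℕ := n - (m + 1) with hK
  have hnm : n - m = K + 1 := by omega
  have h1 : HasDerivAt (auxF n c m)
      (∑ j ∈ Finset.range (m + 1),
        (1 / ((j + K + 1).factorial : ℝ)) * (m.choose j : ℝ) *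
          (((j + K + 1) * s ^ (j + K)) * iteratedDeriv j c s
            + s ^ (j + K + 1) * iteratedDeriv (j + 1) c s)) s := by
    unfold auxF
    rw [hnm]
    apply HasDerivAt.fun_sum
    intro j hj
    have hjn : j < n := by
      have := Finset.mem_range.mp hj; omega
    have hg : HasDerivAt (iteratedDeriv j c) (iteratedDeriv (j + 1) c s) s := by
      rw [iteratedDeriv_succ]
      exact ((hc.differentiable_iteratedDeriv j (by exact_mod_cast hjn)) s).hasDerivAt
    have hp : HasDerivAt (fun t : ℝ => t ^ (j + K + 1))
        ((j + K + 1) * s ^ (j + K)) s := by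
      simpa using hasDerivAt_pow (j + K + 1) s
    have hstep := (hp.fun_mul hg).const_mul ((1 / ((j + K + 1).factorial : ℝ)) * (m.choose j : ℝ))
    simp only [← mul_assoc] at hstep
    exact hstep
    try ring
  convert h1 using 1
  -- algebraic identity
  unfold auxF
  have hnm1 : n - (m + 1) = K := hK.symm
  rw [hnm1]
  set b : ℕ → ℝ := fun j => (1 / ((j + K).factorial : ℝ)) * s ^ (j + K) * iteratedDeriv j c s
    with hb
  have hLHS : ∑ j ∈ Finset.range (m + 1 + 1),
      (1 / ((j + K).factorial : ℝ)) * ((m + 1).choose j : ℝ) * s ^ (j + K) *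
        iteratedDeriv j c s
      = ∑ j ∈ Finset.range (m + 2), ((m + 1).choose j : ℝ) * b j := by
    apply Finset.sum_congr rfl
    intro j _; simp [hb]; ring
  rw [hLHS, aux_binom, ← Finset.sum_add_distrib]
  apply Finset.sum_congr rfl
  intro j _
  have hfac : ((j + K + 1).factorial : ℝ) = ((j : ℝ) + K + 1) * ((j + K).factorial : ℝ) := by
    have : (j + K + 1).factorial = (j + K + 1) * (j + K).factorial := Nat.factorial_succ _
    rw [this]; push_cast; ring
  have hfacpos : ((j + K).factorial : ℝ) ≠ 0 := by positivity
  have hx : ((j : ℝ) + K + 1) ≠ 0 := by positivity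
  simp only [hb]
  rw [hfac]
  field_simp
  simp only [show j + 1 + K = j + K + 1 by omega, hfac]
  ring

theorem stmt13 (n : ℕ) (hn : 0 < n) (c : ℝ → ℝ) (hc : ContDiff ℝ n c)
    (h : ℝ → ℝ)
    (hh : ∀ s : ℝ, h s = ∑ j ∈ Finset.range (n + 1),
      (1 / (j.factorial : ℝ)) * (n.choose j : ℝ) * s ^ j * iteratedDeriv j c s)
    (H : ℕ → ℝ → ℝ) (hH0 : H 0 = h)
    (hHsucc : ∀ (k : ℕ) (s : ℝ), H (k + 1) s = ∫ x in (0 : ℝ)..s, H k x) :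
    (∀ s : ℝ, 0 ≤ s → ∀ k : ℕ, 1 ≤ k → k ≤ n →
      H k s = ∑ j ∈ Finset.range (n - k + 1),
        (1 / ((j + k).factorial : ℝ)) * ((n - k).choose j : ℝ) * s ^ (j + k) *
          iteratedDeriv j c s) ∧
    (∀ s : ℝ, 0 ≤ s → H n s = s ^ n * c s / (n.factorial : ℝ)) := by
  have main : ∀ k : ℕ, k ≤ n → ∀ s : ℝ, H k s = auxF n c (n - k) s := by
    intro k
    induction k with
    | zero =>
      intro _ s
      rw [hH0, hh]
      unfold auxF
      simp
    | succ k ih =>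
      intro hk s
      have hk' : k ≤ n := by omega
      have hm : n - (k + 1) < n := by omega
      have hmm : n - k = (n - (k + 1)) + 1 := by omega
      rw [hHsucc]
      have hint : (∫ x in (0:ℝ)..s, H k x) = ∫ x in (0:ℝ)..s, auxF n c (n - k) x := by
        apply intervalIntegral.integral_congr
        intro x _; exact ih hk' x
      rw [hint, hmm]
      rw [intervalIntegral.integral_eq_sub_of_hasDerivAt
        (fun t _ => auxF_deriv n c hc (n - (k+1)) hm t)
        ((auxF_cont n c hc _ (by omega)).intervalIntegrable _ _)]
      have h0 : auxF n c (n - (k + 1)) 0 = 0 := by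
        unfold auxF
        apply Finset.sum_eq_zero
        intro j _
        have : j + (n - (n - (k + 1))) ≠ 0 := by omega
        simp [zero_pow this]
      rw [h0, sub_zero]
  constructor
  · intro s _ k hk1 hkn
    rw [main k hkn s]
    unfold auxF
    have : n - (n - k) = k := by omega
    rw [this]
  · intro s _
    rw [main n le_rfl s]
    unfold auxF
    simp [Nat.sub_self, iteratedDeriv_zero]
    field_simp
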